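/- Suppose μ(x) + ν(x) > 0 for all x, and set γ(x) = μ(x)/(μ(x) + ν(x)) and P*(x) = (μ(x) + ν(x))/2. Let η̂ : X → Fin L → ℝ≥0 with Σ_y η̂(x)(y) = 1 be estimated class probabilities, let ŝ : X → ℝ with ŝ(x) > 0 be an estimated density ratio, let ĥ(x) be any label maximizing y ↦ η̂(x)(y), and let r̂(x) = 1 if and only if (1 − c_in − c_out)·(1 − max_y η̂(x)(y)) + c_out/ŝ(x) > c_in. Then L_scod(ĥ, r̂) − min_{h,r} L_scod(h, r) ≤ 4·Σ_x P*(x)·( Σ_y |η(x)(y) − η̂(x)(y)| + |γ(x) − ŝ(x)/(1 + ŝ(x))| ). -/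

import Mathlib

open Finset

/-- The SCOD risk of a classifier `h` and rejector `r`. -/
noncomputable def Lscod {X : Type*} [Fintype X] {L : ℕ}
    (μ : X → ℝ) (η : X → Fin L → ℝ) (ν : X → ℝ) (cin cout : ℝ)
    (h : X → Fin L) (r : X → Bool) : ℝ :=
  (1 - cin - cout) * ∑ x, μ x * (1 - η x (h x)) * (if r x = false then 1 else 0)
    + cin * ∑ x, μ x * (if r x = true then 1 else 0)
    + cout * ∑ x, ν x * (if r x = false then 1 else 0)

set_option maxHeartbeats 1000000 in
/-- Pointwise regret bound for the plug-in rule, in purely scalar form. -/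
lemma scod_pointwise_aux (cin cout M N S E D m mh q T : ℝ)
    (hc0 : 0 ≤ 1 - cin - cout) (hc1 : 1 - cin - cout ≤ 1)
    (hcin0 : 0 ≤ cin) (hcout0 : 0 ≤ cout)
    (hS : 0 < S) (hSdef : S = M + N) (hM0 : 0 ≤ M) (hN0 : 0 ≤ N)
    (hT0 : 0 < T) (hTS : T ≤ S)
    (hE0 : 0 ≤ E) (hD0 : 0 ≤ D)
    (habs1 : M - T ≤ D * S) (habs2 : T - M ≤ D * S)
    (hm1 : m ≤ 1) (hmh0 : 0 ≤ mh) (hmh1 : mh ≤ 1) (hq0 : 0 ≤ q) (hqm : q ≤ m)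
    (e1 : m - mh ≤ E) (e2 : mh - q ≤ E) (e3 : m - q ≤ 2 * E)
    (b : Bool)
    (hrej : b = true ↔ cin * T < (1 - cin - cout) * T * (1 - mh) + cout * (S - T)) :
    (if b = true then cin * M else (1 - cin - cout) * (M * (1 - q)) + cout * N)
      - min ((1 - cin - cout) * (M * (1 - m)) + cout * N) (cin * M)
    ≤ 4 * ((S / 2) * (E + D)) := by
  have hMS : M ≤ S := by linarith
  have hDS0 : 0 ≤ D * S := mul_nonneg hD0 hS.le
  have hSE0 : 0 ≤ S * E := mul_nonneg hS.le hE0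
  have h9 : cout * N = cout * S - cout * M := by rw [hSdef]; ring
  have hprod1 : (T - M) * (1 - mh) ≤ D * S := by
    rcases le_total (T - M) 0 with h | h
    · linarith [mul_nonneg (neg_nonneg.2 h) (by linarith : (0:ℝ) ≤ 1 - mh)]
    · linarith [mul_nonneg h hmh0, habs2]
  have hprod1' : (M - T) * (1 - q) ≤ D * S := by
    rcases le_total (M - T) 0 with h | h
    · linarith [mul_nonneg (neg_nonneg.2 h) (by linarith : (0:ℝ) ≤ 1 - q)]
    · linarith [mul_nonneg h hq0, habs1]
  have hprod2 : M * (m - mh) ≤ S * E := by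
    rcases le_total (m - mh) 0 with h | h
    · linarith [mul_nonneg hM0 (neg_nonneg.2 h)]
    · linarith [mul_nonneg (sub_nonneg.2 hMS) h,
        mul_nonneg hS.le (by linarith : (0:ℝ) ≤ E - (m - mh))]
  have hprod3 : T * (mh - q) ≤ S * E := by
    rcases le_total (mh - q) 0 with h | h
    · linarith [mul_nonneg hT0.le (neg_nonneg.2 h)]
    · linarith [mul_nonneg (sub_nonneg.2 hTS) h,
        mul_nonneg hS.le (by linarith : (0:ℝ) ≤ E - (mh - q))]
  by_cases hr : b = true
  · rw [if_pos hr]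
    rcases le_total ((1 - cin - cout) * (M * (1 - m)) + cout * N) (cin * M) with hmin | hmin
    · rw [min_eq_left hmin]
      have hrej1 : cin * T < (1 - cin - cout) * T * (1 - mh) + cout * (S - T) := hrej.1 hr
      have h3 : cin * (M - T) ≤ cin * (D * S) := mul_le_mul_of_nonneg_left habs1 hcin0
      have h4 : cout * (M - T) ≤ cout * (D * S) := mul_le_mul_of_nonneg_left habs1 hcout0
      have h5 : (1 - cin - cout) * ((T - M) * (1 - mh)) ≤ (1 - cin - cout) * (D * S) :=
        mul_le_mul_of_nonneg_left hprod1 hc0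
      have h6 : (1 - cin - cout) * (M * (m - mh)) ≤ (1 - cin - cout) * (S * E) :=
        mul_le_mul_of_nonneg_left hprod2 hc0
      have h7 : (1 - cin - cout) * (S * E) ≤ S * E := mul_le_of_le_one_left hSE0 hc1
      linarith [h3, h4, h5, h6, h7, h9, hrej1, hDS0, hSE0]
    · rw [min_eq_right hmin]
      linarith [hDS0, hSE0]
  · rw [if_neg hr]
    have hrej2 : (1 - cin - cout) * T * (1 - mh) + cout * (S - T) ≤ cin * T :=
      le_of_not_gt fun hlt => hr (hrej.2 hlt)
    rcases le_total ((1 - cin - cout) * (M * (1 - m)) + cout * N) (cin * M) with hmin | hmin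
    · rw [min_eq_left hmin]
      have ha : M * (m - q) ≤ S * (2 * E) := by
        linarith [mul_nonneg (sub_nonneg.2 hMS) (sub_nonneg.2 hqm),
          mul_nonneg hS.le (by linarith : (0:ℝ) ≤ 2 * E - (m - q))]
      have hb : (1 - cin - cout) * (M * (m - q)) ≤ M * (m - q) :=
        mul_le_of_le_one_left (mul_nonneg hM0 (sub_nonneg.2 hqm)) hc1
      linarith [hDS0, ha, hb]
    · rw [min_eq_right hmin]
      have h3 : cin * (T - M) ≤ cin * (D * S) := mul_le_mul_of_nonneg_left habs2 hcin0
      have h4 : cout * (T - M) ≤ cout * (D * S) := mul_le_mul_of_nonneg_left habs2 hcout0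
      have h5 : (1 - cin - cout) * ((M - T) * (1 - q)) ≤ (1 - cin - cout) * (D * S) :=
        mul_le_mul_of_nonneg_left hprod1' hc0
      have h6 : (1 - cin - cout) * (T * (mh - q)) ≤ (1 - cin - cout) * (S * E) :=
        mul_le_mul_of_nonneg_left hprod3 hc0
      have h7 : (1 - cin - cout) * (S * E) ≤ S * E := mul_le_of_le_one_left hSE0 hc1
      linarith [h3, h4, h5, h6, h7, h9, hrej2, hDS0, hSE0]

/-- Lemma 4.1, regret bound for the black-box plug-in rejector:
with `γ(x) = μ(x)/(μ(x)+ν(x))` and `P*(x) = (μ(x)+ν(x))/2`, if `ĥ` is a plug-in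
argmax classifier for estimates `η̂` and `r̂` rejects iff
`(1 − c_in − c_out)·(1 − max_y η̂(x)(y)) + c_out/ŝ(x) > c_in`, then the SCOD regret of
`(ĥ, r̂)` is at most
`4·Σ_x P*(x)·(Σ_y |η(x)(y) − η̂(x)(y)| + |γ(x) − ŝ(x)/(1+ŝ(x))|)`. -/
theorem scod_blackbox_plugin_regret
    {X : Type*} [Fintype X] [Nonempty X] {L : ℕ} (hL : 2 ≤ L)
    (μ : X → ℝ) (hμ0 : ∀ x, 0 ≤ μ x) (hμ1 : ∑ x, μ x = 1)
    (η : X → Fin L → ℝ) (hη0 : ∀ x y, 0 ≤ η x y) (hη1 : ∀ x, ∑ y, η x y = 1)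
    (ν : X → ℝ) (hν0 : ∀ x, 0 ≤ ν x) (hν1 : ∑ x, ν x = 1)
    (cin cout : ℝ) (hcin0 : 0 ≤ cin) (hcin1 : cin ≤ 1)
    (hcout0 : 0 ≤ cout) (hcout1 : cout ≤ 1) (hsum : cin + cout ≤ 1)
    (hpos : ∀ x, 0 < μ x + ν x)
    (ηhat : X → Fin L → ℝ) (hηhat0 : ∀ x y, 0 ≤ ηhat x y)
    (hηhat1 : ∀ x, ∑ y, ηhat x y = 1)
    (shat : X → ℝ) (hshat : ∀ x, 0 < shat x)
    (hhat : X → Fin L) (hhhat : ∀ x y, ηhat x y ≤ ηhat x (hhat x))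
    (rhat : X → Bool)
    (hrhat : ∀ x, rhat x = true ↔
      (1 - cin - cout) * (1 - ⨆ y, ηhat x y) + cout / shat x > cin) :
    Lscod μ η ν cin cout hhat rhat
        - (⨅ p : (X → Fin L) × (X → Bool), Lscod μ η ν cin cout p.1 p.2)
    ≤ 4 * ∑ x, ((μ x + ν x) / 2) *
        ((∑ y, |η x y - ηhat x y|)
          + |μ x / (μ x + ν x) - shat x / (1 + shat x)|) := by
  classical
  haveI : NeZero L := ⟨by omega⟩
  have hc0 : (0:ℝ) ≤ 1 - cin - cout := by linarith
  have hc1 : (1:ℝ) - cin - cout ≤ 1 := by linarith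
  -- an argmax for the true conditional probabilities
  have hex : ∀ x : X, ∃ y : Fin L, ∀ z, η x z ≤ η x y := fun x => Finite.exists_max (η x)
  choose hstar hhstar using hex
  set B : X → ℝ := fun x =>
    min ((1 - cin - cout) * (μ x * (1 - η x (hstar x))) + cout * ν x) (cin * μ x) with hB
  have hL_eq : ∀ (h : X → Fin L) (r : X → Bool),
      Lscod μ η ν cin cout h r
        = ∑ x, (if r x = true then cin * μ x
            else (1 - cin - cout) * (μ x * (1 - η x (h x))) + cout * ν x) := by
    intro h r
    unfold Lscod
    rw [Finset.mul_sum, Finset.mul_sum, Finset.mul_sum, ← Finset.sum_add_distrib,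
      ← Finset.sum_add_distrib]
    refine Finset.sum_congr rfl fun x _ => ?_
    cases hr : r x <;> simp [hr] <;> ring
  have hBle : ∀ p : (X → Fin L) × (X → Bool),
      ∑ x, B x ≤ Lscod μ η ν cin cout p.1 p.2 := by
    intro p
    rw [hL_eq]
    refine Finset.sum_le_sum fun x _ => ?_
    simp only [hB]
    by_cases hr : p.2 x = true
    · rw [if_pos hr]; exact min_le_right _ _
    · rw [if_neg hr]
      refine le_trans (min_le_left _ _) ?_
      have h1 : η x (p.1 x) ≤ η x (hstar x) := hhstar x _
      have h2 : 0 ≤ (1 - cin - cout) * μ x := mul_nonneg hc0 (hμ0 x)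
      nlinarith [hμ0 x]
  have hinf : ∑ x, B x ≤ ⨅ p : (X → Fin L) × (X → Bool), Lscod μ η ν cin cout p.1 p.2 :=
    le_ciInf hBle
  have key : ∀ x : X, (if rhat x = true then cin * μ x
        else (1 - cin - cout) * (μ x * (1 - η x (hhat x))) + cout * ν x) - B x
      ≤ 4 * (((μ x + ν x) / 2) *
        ((∑ y, |η x y - ηhat x y|) + |μ x / (μ x + ν x) - shat x / (1 + shat x)|)) := by
    intro x
    simp only [hB]
    have hS : (0:ℝ) < μ x + ν x := hpos x
    have hs1 : (0:ℝ) < 1 + shat x := by linarith [hshat x]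
    set S := μ x + ν x with hS_def
    set σ := shat x / (1 + shat x) with hσ_def
    set E := ∑ y, |η x y - ηhat x y| with hE_def
    set D := |μ x / S - σ| with hD_def
    set m := η x (hstar x) with hm_def
    set mh := ηhat x (hhat x) with hmh_def
    set q := η x (hhat x) with hq_def
    set T := σ * S with hT_def
    have hσ0 : 0 < σ := div_pos (hshat x) hs1
    have hσ1 : σ < 1 := by rw [hσ_def, div_lt_one hs1]; linarith
    have hT0 : 0 < T := mul_pos hσ0 hS
    have hTS : T ≤ S := by nlinarith
    have hM0 := hμ0 x
    have hE0 : 0 ≤ E := Finset.sum_nonneg fun y _ => abs_nonneg _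
    have hD0 : 0 ≤ D := abs_nonneg _
    have habs1 : μ x - T ≤ D * S := by
      have h := le_abs_self (μ x / S - σ)
      have h2 : (μ x / S - σ) * S = μ x - T := by
        rw [hT_def, sub_mul, div_mul_cancel₀ _ hS.ne']
      rw [← h2]; exact mul_le_mul_of_nonneg_right h hS.le
    have habs2 : T - μ x ≤ D * S := by
      have h := le_abs_self (σ - μ x / S)
      rw [abs_sub_comm] at h
      have h2 : (σ - μ x / S) * S = T - μ x := by
        rw [hT_def, sub_mul, div_mul_cancel₀ _ hS.ne']
      rw [← h2]; exact mul_le_mul_of_nonneg_right h hS.le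
    have habsy : ∀ y : Fin L, |η x y - ηhat x y| ≤ E := by
      intro y
      rw [hE_def]
      exact Finset.single_le_sum (f := fun z => |η x z - ηhat x z|)
        (fun i _ => abs_nonneg _) (Finset.mem_univ y)
    have hm1 : m ≤ 1 := by
      have h := Finset.single_le_sum (f := η x) (fun i _ => hη0 x i) (Finset.mem_univ (hstar x))
      rw [hη1 x] at h
      rw [hm_def]; exact h
    have hmh1 : mh ≤ 1 := by
      have h := Finset.single_le_sum (f := ηhat x) (fun i _ => hηhat0 x i)
        (Finset.mem_univ (hhat x))
      rw [hηhat1 x] at h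
      rw [hmh_def]; exact h
    have hq0 : 0 ≤ q := hη0 x _
    have hmh0 : 0 ≤ mh := hηhat0 x _
    have hqm : q ≤ m := hhstar x _
    have e1 : m - mh ≤ E := by
      have h1 := habsy (hstar x)
      have h2 : ηhat x (hstar x) ≤ mh := hhhat x _
      have h3 := le_abs_self (η x (hstar x) - ηhat x (hstar x))
      rw [hm_def]; linarith
    have e2 : mh - q ≤ E := by
      have h1 := habsy (hhat x)
      have h3 := neg_abs_le (η x (hhat x) - ηhat x (hhat x))
      rw [hmh_def, hq_def]; linarith
    have e3 : m - q ≤ 2 * E := by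
      have h1 := habsy (hstar x)
      have h2 := habsy (hhat x)
      have h3 : ηhat x (hstar x) ≤ mh := hhhat x _
      have t1 := le_abs_self (η x (hstar x) - ηhat x (hstar x))
      have t2 := neg_abs_le (η x (hhat x) - ηhat x (hhat x))
      rw [hm_def, hq_def]
      rw [hmh_def] at h3
      linarith
    have hsup : (⨆ y, ηhat x y) = mh := by
      refine le_antisymm (ciSup_le fun y => hhhat x y) ?_
      exact le_ciSup (Set.Finite.bddAbove (Set.finite_range _)) (hhat x)
    have hσs : σ / shat x = 1 - σ := by
      rw [hσ_def, div_div, mul_comm (1 + shat x) (shat x), ← div_div,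
        div_self (hshat x).ne', eq_sub_iff_add_eq, ← add_div,
        div_self hs1.ne']
    have hdivT : cout / shat x * T = cout * (S - T) := by
      rw [hT_def]
      calc cout / shat x * (σ * S) = cout * (σ / shat x) * S := by ring
        _ = cout * (1 - σ) * S := by rw [hσs]
        _ = cout * (S - σ * S) := by ring
    have hkey : ((1 - cin - cout) * (1 - mh) + cout / shat x) * T
        = (1 - cin - cout) * T * (1 - mh) + cout * (S - T) := by
      rw [add_mul, hdivT]; ring
    have hrej : rhat x = true ↔ cin * T < (1 - cin - cout) * T * (1 - mh) + cout * (S - T) := by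
      rw [hrhat x, hsup, gt_iff_lt, ← hkey]
      exact (mul_lt_mul_iff_of_pos_right hT0).symm
    exact scod_pointwise_aux cin cout (μ x) (ν x) S E D m mh q T hc0 hc1 hcin0 hcout0
      hS hS_def hM0 (hν0 x) hT0 hTS hE0 hD0 habs1 habs2 hm1 hmh0 hmh1 hq0 hqm e1 e2 e3
      (rhat x) hrej
  have hmain : Lscod μ η ν cin cout hhat rhat - ∑ x, B x
      ≤ 4 * ∑ x, ((μ x + ν x) / 2) *
        ((∑ y, |η x y - ηhat x y|) + |μ x / (μ x + ν x) - shat x / (1 + shat x)|) := by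
    rw [hL_eq, ← Finset.sum_sub_distrib, Finset.mul_sum]
    exact Finset.sum_le_sum fun x _ => key x
  linarith
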